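/- For l = 3, the root set is exactly Φ₃ = {±(e_i − e_j) : 1 ≤ i < j ≤ 3} ∪ {±(e₀ − e₁ − e₂ − e₃)}, so Φ₃ has exactly 8 elements, and the group of K-isometries of L₃ has order 12; it is isomorphic to the direct product of a cyclic group of order 2 with the symmetric group on 3 letters (the Weyl group of type A₁ × A₂). -/

import Mathlib

set_option maxHeartbeats 1000000


/- The lattice `L₃ = ℤ⁴` with the diagonal form `B` of signature `(1, -1, -1, -1)`
and the distinguished element `k = -3e₀ + e₁ + e₂ + e₃`. -/

/-- The intersection form `B` on `L_l = ℤ^{1+l}`. -/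
def interForm (l : ℕ) (x y : Fin (l + 1) → ℤ) : ℤ :=
  ∑ i : Fin (l + 1), (if i = 0 then 1 else -1) * x i * y i

/-- The canonical class `k = -3e₀ + e₁ + ⋯ + e_l`. -/
def canonClass (l : ℕ) : Fin (l + 1) → ℤ := fun i => if i = 0 then -3 else 1

/-- The group of `K`-isometries of `L_l`: ℤ-linear automorphisms preserving `B`
and fixing `k`, as a subgroup of the automorphism group. -/
def kIsoGroup (l : ℕ) : Subgroup ((Fin (l + 1) → ℤ) ≃ₗ[ℤ] (Fin (l + 1) → ℤ)) where
  carrier := {φ | (∀ x y, interForm l (φ x) (φ y) = interForm l x y) ∧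
    φ (canonClass l) = canonClass l}
  one_mem' := ⟨fun _ _ => rfl, rfl⟩
  mul_mem' := by
    intro a b ha hb
    refine ⟨fun x y => ?_, ?_⟩
    · show interForm l (a (b x)) (a (b y)) = interForm l x y
      rw [ha.1, hb.1]
    · show a (b (canonClass l)) = canonClass l
      rw [hb.2, ha.2]
  inv_mem' := by
    intro a ha
    refine ⟨fun x y => ?_, ?_⟩
    · show interForm l (a.symm x) (a.symm y) = interForm l x y
      conv_rhs => rw [← a.apply_symm_apply x, ← a.apply_symm_apply y, ha.1]
    · show a.symm (canonClass l) = canonClass l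
      conv_lhs => rw [← ha.2]
      exact a.symm_apply_apply _

/-- `e_i`: the `i`-th standard basis vector. -/
def stdVec (l : ℕ) (i : Fin (l + 1)) : Fin (l + 1) → ℤ := Pi.single i 1

/-- For `l = 3`: the root set is exactly
`{±(e_i - e_j) : 1 ≤ i < j ≤ 3} ∪ {±(e₀ - e₁ - e₂ - e₃)}`, it has exactly `8`
elements, and the group of `K`-isometries of `L₃` has order `12`, being isomorphic
to the product of a cyclic group of order `2` and the symmetric group on `3` letters. -/
lemma root_enum (a b c d : ℤ) (h1 : a*a - b*b - c*c - d*d = -2)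
    (h2 : -3*a - b - c - d = 0) :
    (a = 0 ∧ b = 1 ∧ c = -1 ∧ d = 0) ∨ (a = 0 ∧ b = -1 ∧ c = 1 ∧ d = 0) ∨
    (a = 0 ∧ b = 1 ∧ c = 0 ∧ d = -1) ∨ (a = 0 ∧ b = -1 ∧ c = 0 ∧ d = 1) ∨
    (a = 0 ∧ b = 0 ∧ c = 1 ∧ d = -1) ∨ (a = 0 ∧ b = 0 ∧ c = -1 ∧ d = 1) ∨
    (a = 1 ∧ b = -1 ∧ c = -1 ∧ d = -1) ∨ (a = -1 ∧ b = 1 ∧ c = 1 ∧ d = 1) := by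
  have h3 : b + c + d = -3*a := by omega
  have h4 : (b+c+d)*(b+c+d) = 9*(a*a) := by rw [h3]; ring
  have ha : a*a ≤ 1 := by nlinarith [sq_nonneg (b-c), sq_nonneg (b-d), sq_nonneg (c-d), h4]
  have hb : b*b ≤ 3 := by nlinarith [sq_nonneg c, sq_nonneg d]
  have hc : c*c ≤ 3 := by nlinarith [sq_nonneg b, sq_nonneg d]
  have hd : d*d ≤ 3 := by nlinarith [sq_nonneg b, sq_nonneg c]
  have ha1 : -1 ≤ a ∧ a ≤ 1 := by constructor <;> nlinarith [sq_nonneg (a+1), sq_nonneg (a-1)]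
  have hb1 : -1 ≤ b ∧ b ≤ 1 := by constructor <;> nlinarith [sq_nonneg (b+1), sq_nonneg (b-1)]
  have hc1 : -1 ≤ c ∧ c ≤ 1 := by constructor <;> nlinarith [sq_nonneg (c+1), sq_nonneg (c-1)]
  have hd1 : -1 ≤ d ∧ d ≤ 1 := by constructor <;> nlinarith [sq_nonneg (d+1), sq_nonneg (d-1)]
  obtain ⟨ha1, ha2⟩ := ha1; obtain ⟨hb1, hb2⟩ := hb1
  obtain ⟨hc1, hc2⟩ := hc1; obtain ⟨hd1, hd2⟩ := hd1
  interval_cases a <;> interval_cases b <;> interval_cases c <;> interval_cases d <;> omega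

def rootFS : Finset (Fin 4 → ℤ) :=
  { ![0,1,-1,0], ![0,-1,1,0], ![0,1,0,-1], ![0,-1,0,1], ![0,0,1,-1], ![0,0,-1,1],
    ![1,-1,-1,-1], ![-1,1,1,1] }

lemma rootFS_card : rootFS.card = 8 := by decide

lemma setS_eq :
    {x : Fin 4 → ℤ | interForm 3 x x = -2 ∧ interForm 3 x (canonClass 3) = 0} = ↑rootFS := by
  ext x
  simp only [Set.mem_setOf_eq, Finset.mem_coe]
  constructor
  · rintro ⟨h1, h2⟩
    simp [interForm, canonClass, Fin.sum_univ_four] at h1 h2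
    have hx : x = ![x 0, x 1, x 2, x 3] := by funext i; fin_cases i <;> rfl
    rcases root_enum (x 0) (x 1) (x 2) (x 3) (by linarith) (by linarith) with
      h|h|h|h|h|h|h|h <;> rw [hx, h.1, h.2.1, h.2.2.1, h.2.2.2] <;> decide
  · intro h
    fin_cases h <;> exact ⟨by decide, by decide⟩

lemma setRHS_eq :
    {x : Fin 4 → ℤ |
        (∃ i j : Fin 4, 0 < i ∧ i < j ∧
          (x = stdVec 3 i - stdVec 3 j ∨ x = -(stdVec 3 i - stdVec 3 j))) ∨
        x = stdVec 3 0 - stdVec 3 1 - stdVec 3 2 - stdVec 3 3 ∨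
        x = -(stdVec 3 0 - stdVec 3 1 - stdVec 3 2 - stdVec 3 3)} = ↑rootFS := by
  ext x
  simp only [Set.mem_setOf_eq, Finset.mem_coe]
  constructor
  · rintro (⟨i, j, hi, hij, (rfl|rfl)⟩ | rfl | rfl)
    · fin_cases i <;> fin_cases j <;> revert hi hij <;> decide
    · fin_cases i <;> fin_cases j <;> revert hi hij <;> decide
    · decide
    · decide
  · intro h
    fin_cases h
    · exact Or.inl ⟨1, 2, by decide, by decide, Or.inl (by decide)⟩
    · exact Or.inl ⟨1, 2, by decide, by decide, Or.inr (by decide)⟩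
    · exact Or.inl ⟨1, 3, by decide, by decide, Or.inl (by decide)⟩
    · exact Or.inl ⟨1, 3, by decide, by decide, Or.inr (by decide)⟩
    · exact Or.inl ⟨2, 3, by decide, by decide, Or.inl (by decide)⟩
    · exact Or.inl ⟨2, 3, by decide, by decide, Or.inr (by decide)⟩
    · exact Or.inr (Or.inl (by decide))
    · exact Or.inr (Or.inr (by decide))

/-- The root `r = e₀ - e₁ - e₂ - e₃`. -/
def rt : Fin 4 → ℤ := fun i => if i = 0 then 1 else -1

def sLin : (Fin 4 → ℤ) →ₗ[ℤ] (Fin 4 → ℤ) where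
  toFun x := x + interForm 3 x rt • rt
  map_add' x y := by
    funext i; fin_cases i <;> (simp [interForm, Fin.sum_univ_four, rt]; ring)
  map_smul' c x := by
    funext i; fin_cases i <;> (simp [interForm, Fin.sum_univ_four, rt]; ring)

lemma sLin_invol : Function.Involutive sLin := by
  intro x; funext i
  fin_cases i <;> simp [sLin, interForm, Fin.sum_univ_four, rt] <;> ring

def sEq : (Fin 4 → ℤ) ≃ₗ[ℤ] (Fin 4 → ℤ) := LinearEquiv.ofInvolutive sLin sLin_invol

lemma sEq_apply (x : Fin 4 → ℤ) : sEq x = x + interForm 3 x rt • rt := rfl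

def tau (σ : Equiv.Perm (Fin 3)) : Equiv.Perm (Fin 4) := Equiv.Perm.decomposeFin.symm (0, σ)

lemma tau_zero (σ : Equiv.Perm (Fin 3)) : tau σ 0 = 0 := by
  simp [tau]

lemma tau_succ (σ : Equiv.Perm (Fin 3)) (j : Fin 3) : tau σ j.succ = (σ j).succ := by
  simp [tau]

lemma tau_mul (a b : Equiv.Perm (Fin 3)) : tau (a * b) = tau a * tau b := by
  ext i
  cases i using Fin.cases with
  | zero => simp [tau_zero]
  | succ j => simp [tau_succ]

lemma tau_one : tau 1 = 1 := by
  ext i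
  cases i using Fin.cases with
  | zero => simp [tau_zero]
  | succ j => simp [tau_succ]

lemma tau_inv (σ : Equiv.Perm (Fin 3)) : tau σ⁻¹ = (tau σ)⁻¹ := by
  rw [eq_inv_iff_mul_eq_one, ← tau_mul, inv_mul_cancel, tau_one]

lemma tau_eq_zero_iff (σ : Equiv.Perm (Fin 3)) (i : Fin 4) : tau σ i = 0 ↔ i = 0 := by
  constructor
  · intro h; exact (tau σ).injective (h.trans (tau_zero σ).symm)
  · rintro rfl; exact tau_zero σ

def PEq (σ : Equiv.Perm (Fin 3)) : (Fin 4 → ℤ) ≃ₗ[ℤ] (Fin 4 → ℤ) :=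
  LinearEquiv.funCongrLeft ℤ ℤ (tau σ⁻¹ : Equiv.Perm (Fin 4))

lemma PEq_apply (σ : Equiv.Perm (Fin 3)) (x : Fin 4 → ℤ) (i : Fin 4) :
    PEq σ x i = x (tau σ⁻¹ i) := rfl

lemma PEq_single (σ : Equiv.Perm (Fin 3)) (m : Fin 4) :
    PEq σ (Pi.single m 1) = Pi.single (tau σ m) (1 : ℤ) := by
  funext i
  rw [PEq_apply]
  simp only [Pi.single_apply]
  congr 1
  rw [tau_inv]
  apply propext
  constructor
  · rintro rfl; simp
  · rintro rfl; simp

lemma interForm_comp (e : Equiv.Perm (Fin 4)) (he : ∀ i, e i = 0 ↔ i = 0) (x y : Fin 4 → ℤ) :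
    interForm 3 (fun i => x (e i)) (fun i => y (e i)) = interForm 3 x y := by
  unfold interForm
  rw [← Equiv.sum_comp e (fun i => (if i = 0 then (1:ℤ) else -1) * x i * y i)]
  refine Finset.sum_congr rfl fun i _ => ?_
  simp only [he]

lemma PEq_mem (σ : Equiv.Perm (Fin 3)) : PEq σ ∈ kIsoGroup 3 := by
  constructor
  · intro x y
    exact interForm_comp (tau σ⁻¹) (tau_eq_zero_iff σ⁻¹) x y
  · funext i
    rw [PEq_apply]
    simp [canonClass, tau_eq_zero_iff]

lemma sEq_fun (x : Fin 4 → ℤ) : sEq x = fun i => x i + (interForm 3 x rt) * rt i := by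
  funext i; rw [sEq_apply]; simp

lemma interForm_add_left (x x' y : Fin 4 → ℤ) :
    interForm 3 (x + x') y = interForm 3 x y + interForm 3 x' y := by
  simp only [interForm, Pi.add_apply, ← Finset.sum_add_distrib]
  exact Finset.sum_congr rfl fun i _ => by ring

lemma interForm_add_right (x y y' : Fin 4 → ℤ) :
    interForm 3 x (y + y') = interForm 3 x y + interForm 3 x y' := by
  simp only [interForm, Pi.add_apply, ← Finset.sum_add_distrib]
  exact Finset.sum_congr rfl fun i _ => by ring

lemma interForm_smul_left (c : ℤ) (x y : Fin 4 → ℤ) :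
    interForm 3 (c • x) y = c * interForm 3 x y := by
  simp only [interForm, Pi.smul_apply, smul_eq_mul, Finset.mul_sum]
  exact Finset.sum_congr rfl fun i _ => by ring

lemma interForm_smul_right (c : ℤ) (x y : Fin 4 → ℤ) :
    interForm 3 x (c • y) = c * interForm 3 x y := by
  simp only [interForm, Pi.smul_apply, smul_eq_mul, Finset.mul_sum]
  exact Finset.sum_congr rfl fun i _ => by ring

lemma interForm_comm (x y : Fin 4 → ℤ) : interForm 3 x y = interForm 3 y x := by
  exact Finset.sum_congr rfl fun i _ => by ring

lemma sEq_mem : sEq ∈ kIsoGroup 3 := by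
  constructor
  · intro x y
    have hrr : interForm 3 rt rt = -2 := by decide
    rw [sEq_apply, sEq_apply, interForm_add_left, interForm_add_right, interForm_add_right,
      interForm_smul_left, interForm_smul_left, interForm_smul_right, interForm_smul_right, hrr,
      interForm_comm rt y]
    ring
  · funext i
    fin_cases i <;> simp [sEq_apply, interForm, canonClass, Fin.sum_univ_four, rt]

def sG : kIsoGroup 3 := ⟨sEq, sEq_mem⟩
def pG (σ : Equiv.Perm (Fin 3)) : kIsoGroup 3 := ⟨PEq σ, PEq_mem σ⟩

lemma sG_sq : sG * sG = 1 := by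
  refine Subtype.ext (LinearEquiv.ext fun x => ?_)
  show sEq (sEq x) = x
  exact sLin_invol x

lemma PEq_rt (σ : Equiv.Perm (Fin 3)) : PEq σ rt = rt := by
  funext i; rw [PEq_apply]; simp [rt, tau_eq_zero_iff]

lemma sG_comm (σ : Equiv.Perm (Fin 3)) : sG * pG σ = pG σ * sG := by
  refine Subtype.ext (LinearEquiv.ext fun x => ?_)
  show sEq (PEq σ x) = PEq σ (sEq x)
  have hB := (PEq_mem σ).1 x rt
  rw [PEq_rt] at hB
  rw [sEq_apply, sEq_apply, hB, map_add, map_smul, PEq_rt]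

lemma pG_mul (σ σ' : Equiv.Perm (Fin 3)) : pG (σ * σ') = pG σ * pG σ' := by
  refine Subtype.ext (LinearEquiv.ext fun x => funext fun i => ?_)
  show PEq (σ * σ') x i = PEq σ (PEq σ' x) i
  rw [PEq_apply, PEq_apply, PEq_apply, mul_inv_rev, tau_mul]
  rfl

def FH : Multiplicative (ZMod 2) × Equiv.Perm (Fin 3) →* kIsoGroup 3 :=
  MonoidHom.mk' (fun p => (if Multiplicative.toAdd p.1 = 0 then 1 else sG) * pG p.2) (by
    rintro ⟨a, σ⟩ ⟨b, σ'⟩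
    have hz : ∀ z : ZMod 2, z = 0 ∨ z = 1 := by decide
    simp only [Prod.fst_mul, Prod.snd_mul, toAdd_mul, pG_mul]
    rcases hz (Multiplicative.toAdd a) with h1 | h1 <;>
      rcases hz (Multiplicative.toAdd b) with h2 | h2 <;>
      simp only [h1, h2, add_zero, zero_add]
    · simp
    · have hne : ((1:ZMod 2) = 0) = False := by decide
      simp only [hne, if_false, if_true, one_mul]
      rw [← mul_assoc sG, sG_comm σ, mul_assoc]
    · have hne : ((1:ZMod 2) = 0) = False := by decide
      simp only [hne, if_false, if_true, one_mul]
      rw [mul_assoc]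
    · have hne : ((1:ZMod 2) = 0) = False := by decide
      have h11 : ((1:ZMod 2) + 1 = 0) = True := by decide
      simp only [hne, h11, if_false, if_true, one_mul]
      rw [sG_comm σ, mul_assoc (pG σ) sG (sG * pG σ'), ← mul_assoc sG sG (pG σ'), sG_sq, one_mul])

lemma single_inj : ∀ a b : Fin 4, (Pi.single a 1 : Fin 4 → ℤ) = Pi.single b 1 → a = b := by decide

lemma sEq_e0 : sEq (stdVec 3 0) = ![2,-1,-1,-1] := by
  rw [sEq_apply]; decide

lemma PEq_e0 (σ : Equiv.Perm (Fin 3)) : PEq σ (stdVec 3 0) = stdVec 3 0 := by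
  show PEq σ (Pi.single 0 1) = Pi.single 0 1
  rw [PEq_single, tau_zero]

lemma FH_inj : Function.Injective FH := by
  rw [injective_iff_map_eq_one]
  rintro ⟨a, σ⟩ h
  have hz : (Multiplicative.toAdd a) = 0 ∨ (Multiplicative.toAdd a) = 1 :=
    (by decide : ∀ z : ZMod 2, z = 0 ∨ z = 1) _
  rcases hz with h0 | h0
  · have hFa : FH (a, σ) = pG σ := by
      show (if Multiplicative.toAdd a = 0 then 1 else sG) * pG σ = pG σ
      rw [if_pos h0, one_mul]
    rw [hFa] at h
    have ha : a = 1 := by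
      have : Multiplicative.toAdd a = Multiplicative.toAdd (1 : Multiplicative (ZMod 2)) := h0
      exact Multiplicative.toAdd.injective this
    have hσ : σ = 1 := by
      apply Equiv.ext; intro j
      show σ j = j
      have h2 : PEq σ (Pi.single (Fin.succ j) (1:ℤ)) = Pi.single (Fin.succ j) (1:ℤ) :=
        congrArg (fun g : kIsoGroup 3 =>
          (g : (Fin 4 → ℤ) ≃ₗ[ℤ] (Fin 4 → ℤ)) (Pi.single (Fin.succ j) (1:ℤ))) h
      rw [PEq_single] at h2
      have h3 := single_inj _ _ h2
      rw [tau_succ] at h3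
      exact Fin.succ_injective 3 h3
    rw [ha, hσ]; rfl
  · have hFa : FH (a, σ) = sG * pG σ := by
      show (if Multiplicative.toAdd a = 0 then 1 else sG) * pG σ = sG * pG σ
      rw [if_neg (by rw [h0]; decide)]
    rw [hFa] at h
    have h2 : sEq (PEq σ (stdVec 3 0)) = stdVec 3 0 :=
      congrArg (fun g : kIsoGroup 3 =>
        (g : (Fin 4 → ℤ) ≃ₗ[ℤ] (Fin 4 → ℤ)) (stdVec 3 0)) h
    rw [PEq_e0, sEq_e0] at h2
    exact absurd h2 (by decide)

lemma e0_enum (a b c d : ℤ) (h1 : a*a - b*b - c*c - d*d = 1) (h2 : 3*a + b + c + d = 3) :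
    (a = 1 ∧ b = 0 ∧ c = 0 ∧ d = 0) ∨ (a = 2 ∧ b = -1 ∧ c = -1 ∧ d = -1) := by
  have h3 : b + c + d = 3 - 3*a := by omega
  have h4 : (b+c+d)*(b+c+d) = (3-3*a)*(3-3*a) := by rw [h3]
  have ha : (a-1)*(a-2) ≤ 0 := by nlinarith [sq_nonneg (b-c), sq_nonneg (b-d), sq_nonneg (c-d), h4]
  have ha1 : 1 ≤ a := by nlinarith [sq_nonneg (a-1), sq_nonneg (a-2)]
  have ha2 : a ≤ 2 := by nlinarith [sq_nonneg (a-1), sq_nonneg (a-2)]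
  have hb : b*b ≤ 3 := by nlinarith [sq_nonneg c, sq_nonneg d]
  have hc : c*c ≤ 3 := by nlinarith [sq_nonneg b, sq_nonneg d]
  have hd : d*d ≤ 3 := by nlinarith [sq_nonneg b, sq_nonneg c]
  have hb1 : -1 ≤ b ∧ b ≤ 1 := by constructor <;> nlinarith [sq_nonneg (b+1), sq_nonneg (b-1)]
  have hc1 : -1 ≤ c ∧ c ≤ 1 := by constructor <;> nlinarith [sq_nonneg (c+1), sq_nonneg (c-1)]
  have hd1 : -1 ≤ d ∧ d ≤ 1 := by constructor <;> nlinarith [sq_nonneg (d+1), sq_nonneg (d-1)]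
  obtain ⟨hb1, hb2⟩ := hb1; obtain ⟨hc1, hc2⟩ := hc1; obtain ⟨hd1, hd2⟩ := hd1
  interval_cases a <;> interval_cases b <;> interval_cases c <;> interval_cases d <;> omega

lemma ei_enum (b c d : ℤ) (h1 : b*b + c*c + d*d = 1) (h2 : b + c + d = 1) :
    (b = 1 ∧ c = 0 ∧ d = 0) ∨ (b = 0 ∧ c = 1 ∧ d = 0) ∨ (b = 0 ∧ c = 0 ∧ d = 1) := by
  have hb : b*b ≤ 1 := by nlinarith [sq_nonneg c, sq_nonneg d]
  have hc : c*c ≤ 1 := by nlinarith [sq_nonneg b, sq_nonneg d]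
  have hd : d*d ≤ 1 := by nlinarith [sq_nonneg b, sq_nonneg c]
  have hb1 : -1 ≤ b ∧ b ≤ 1 := by constructor <;> nlinarith [sq_nonneg (b+1), sq_nonneg (b-1)]
  have hc1 : -1 ≤ c ∧ c ≤ 1 := by constructor <;> nlinarith [sq_nonneg (c+1), sq_nonneg (c-1)]
  have hd1 : -1 ≤ d ∧ d ≤ 1 := by constructor <;> nlinarith [sq_nonneg (d+1), sq_nonneg (d-1)]
  obtain ⟨hb1, hb2⟩ := hb1; obtain ⟨hc1, hc2⟩ := hc1; obtain ⟨hd1, hd2⟩ := hd1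
  interval_cases b <;> interval_cases c <;> interval_cases d <;> omega

lemma img_e0 (v : Fin 4 → ℤ) (h1 : interForm 3 v v = 1)
    (h2 : interForm 3 v (canonClass 3) = -3) :
    v = stdVec 3 0 ∨ v = ![2,-1,-1,-1] := by
  simp [interForm, canonClass, Fin.sum_univ_four] at h1 h2
  have hx : v = ![v 0, v 1, v 2, v 3] := by funext i; fin_cases i <;> rfl
  rcases e0_enum (v 0) (v 1) (v 2) (v 3) (by linarith) (by linarith) with h | h <;>
    [left; right] <;> rw [hx, h.1, h.2.1, h.2.2.1, h.2.2.2] <;> decide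

lemma img_ei (w : Fin 4 → ℤ) (h1 : interForm 3 w w = -1)
    (h2 : interForm 3 w (canonClass 3) = -1) (h3 : interForm 3 w (stdVec 3 0) = 0) :
    w = stdVec 3 1 ∨ w = stdVec 3 2 ∨ w = stdVec 3 3 := by
  simp [interForm, canonClass, stdVec, Fin.sum_univ_four] at h1 h2 h3
  have hx : w = ![w 0, w 1, w 2, w 3] := by funext i; fin_cases i <;> rfl
  have h1' : w 1 * w 1 + w 2 * w 2 + w 3 * w 3 = 1 := by
    rw [h3] at h1; linarith
  have h2' : w 1 + w 2 + w 3 = 1 := by rw [h3] at h2; linarith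
  rcases ei_enum (w 1) (w 2) (w 3) h1' h2' with h | h | h <;>
    [left; (right; left); (right; right)] <;>
    rw [hx, h3, h.1, h.2.1, h.2.2] <;> decide

lemma key (ψ : kIsoGroup 3)
    (h0 : (ψ : (Fin 4 → ℤ) ≃ₗ[ℤ] (Fin 4 → ℤ)) (stdVec 3 0) = stdVec 3 0) :
    ∃ σ : Equiv.Perm (Fin 3), ψ = pG σ := by
  obtain ⟨hB, hk⟩ := ψ.2
  have him : ∀ j : Fin 3, ∃ m : Fin 3,
      (ψ : (Fin 4 → ℤ) ≃ₗ[ℤ] (Fin 4 → ℤ)) (stdVec 3 j.succ) = stdVec 3 m.succ := by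
    intro j
    have h1 : interForm 3 (ψ.1 (stdVec 3 j.succ)) (ψ.1 (stdVec 3 j.succ)) = -1 := by
      rw [hB]
      exact (by decide : ∀ j : Fin 3, interForm 3 (stdVec 3 j.succ) (stdVec 3 j.succ) = -1) j
    have h2 : interForm 3 (ψ.1 (stdVec 3 j.succ)) (canonClass 3) = -1 := by
      conv_lhs => rw [← hk]
      rw [hB]
      exact (by decide : ∀ j : Fin 3, interForm 3 (stdVec 3 j.succ) (canonClass 3) = -1) j
    have h3 : interForm 3 (ψ.1 (stdVec 3 j.succ)) (stdVec 3 0) = 0 := by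
      conv_lhs => rw [← h0]
      rw [hB]
      exact (by decide : ∀ j : Fin 3, interForm 3 (stdVec 3 j.succ) (stdVec 3 0) = 0) j
    rcases img_ei _ h1 h2 h3 with h | h | h
    · exact ⟨0, h⟩
    · exact ⟨1, h⟩
    · exact ⟨2, h⟩
  choose u hu using him
  have uinj : Function.Injective u := by
    intro i i' hii
    have he : (ψ : (Fin 4 → ℤ) ≃ₗ[ℤ] (Fin 4 → ℤ)) (stdVec 3 i.succ)
        = (ψ : (Fin 4 → ℤ) ≃ₗ[ℤ] (Fin 4 → ℤ)) (stdVec 3 i'.succ) := by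
      rw [hu i, hu i', hii]
    have h2 := (ψ : (Fin 4 → ℤ) ≃ₗ[ℤ] (Fin 4 → ℤ)).injective he
    exact Fin.succ_injective 3 (single_inj _ _ h2)
  let σ : Equiv.Perm (Fin 3) := Equiv.ofBijective u (Finite.injective_iff_bijective.mp uinj)
  refine ⟨σ, ?_⟩
  apply Subtype.ext
  apply LinearEquiv.toLinearMap_injective
  apply Module.Basis.ext (Pi.basisFun ℤ (Fin 4))
  intro i
  have hbasis : (Pi.basisFun ℤ (Fin 4)) i = Pi.single i (1:ℤ) := by
    simp [Pi.basisFun_apply]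
  rw [hbasis]
  cases i using Fin.cases with
  | zero =>
    show (ψ : (Fin 4 → ℤ) ≃ₗ[ℤ] (Fin 4 → ℤ)) (Pi.single 0 1) = PEq σ (Pi.single 0 1)
    rw [PEq_single, tau_zero]
    exact h0
  | succ j =>
    show (ψ : (Fin 4 → ℤ) ≃ₗ[ℤ] (Fin 4 → ℤ)) (Pi.single j.succ 1) = PEq σ (Pi.single j.succ 1)
    rw [PEq_single, tau_succ]
    exact hu j

lemma FH_surj : Function.Surjective FH := by
  intro ψ
  obtain ⟨hB, hk⟩ := ψ.2
  have h1 : interForm 3 (ψ.1 (stdVec 3 0)) (ψ.1 (stdVec 3 0)) = 1 := by rw [hB]; decide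
  have h2 : interForm 3 (ψ.1 (stdVec 3 0)) (canonClass 3) = -3 := by
    conv_lhs => rw [← hk]
    rw [hB]; decide
  rcases img_e0 _ h1 h2 with h0 | h0
  · obtain ⟨σ, rfl⟩ := key ψ h0
    refine ⟨(1, σ), ?_⟩
    show (if Multiplicative.toAdd (1 : Multiplicative (ZMod 2)) = 0 then 1 else sG) * pG σ = pG σ
    rw [if_pos (by decide : Multiplicative.toAdd (1 : Multiplicative (ZMod 2)) = 0), one_mul]
  · have h0' : ((sG * ψ : kIsoGroup 3) : (Fin 4 → ℤ) ≃ₗ[ℤ] (Fin 4 → ℤ)) (stdVec 3 0)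
        = stdVec 3 0 := by
      show sEq (ψ.1 (stdVec 3 0)) = stdVec 3 0
      rw [h0, sEq_apply]
      decide
    obtain ⟨σ, hσ⟩ := key (sG * ψ) h0'
    refine ⟨(Multiplicative.ofAdd 1, σ), ?_⟩
    have hψ : ψ = sG * pG σ := by
      rw [← one_mul ψ, ← sG_sq, mul_assoc, hσ]
    rw [hψ]
    show (if Multiplicative.toAdd (Multiplicative.ofAdd (1 : ZMod 2)) = 0 then 1 else sG) * pG σ
        = sG * pG σ
    rw [if_neg (by decide)]

noncomputable def E : Multiplicative (ZMod 2) × Equiv.Perm (Fin 3) ≃* kIsoGroup 3 :=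
  MulEquiv.ofBijective FH ⟨FH_inj, FH_surj⟩

lemma card12 : Nat.card (kIsoGroup 3) = 12 := by
  rw [← Nat.card_congr E.toEquiv, Nat.card_prod]
  simp [Nat.card_eq_fintype_card, Fintype.card_perm]
  norm_num [Nat.factorial]

lemma isoNE : Nonempty (kIsoGroup 3 ≃* Multiplicative (ZMod 2) × Equiv.Perm (Fin 3)) := ⟨E.symm⟩

theorem kIsometries_rank_three :
    ({x : Fin 4 → ℤ | interForm 3 x x = -2 ∧ interForm 3 x (canonClass 3) = 0} =
      {x : Fin 4 → ℤ |
        (∃ i j : Fin 4, 0 < i ∧ i < j ∧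
          (x = stdVec 3 i - stdVec 3 j ∨ x = -(stdVec 3 i - stdVec 3 j))) ∨
        x = stdVec 3 0 - stdVec 3 1 - stdVec 3 2 - stdVec 3 3 ∨
        x = -(stdVec 3 0 - stdVec 3 1 - stdVec 3 2 - stdVec 3 3)}) ∧
    Set.ncard {x : Fin 4 → ℤ | interForm 3 x x = -2 ∧ interForm 3 x (canonClass 3) = 0} = 8 ∧
    Nat.card (kIsoGroup 3) = 12 ∧
    Nonempty (kIsoGroup 3 ≃* Multiplicative (ZMod 2) × Equiv.Perm (Fin 3)) := by
  refine ⟨setS_eq.trans setRHS_eq.symm, ?_, card12, isoNE⟩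
  rw [setS_eq, Set.ncard_coe_finset]
  exact rootFS_card
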